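/- If C and C' are central almost inner derivations of a Lie algebra g, then so is [C,C'] = CC' - C'C. Hence CAID(g) is a Lie subalgebra of Der(g). -/
import Mathlib

private lemma center_lie_zero {K L : Type*} [Field K] [LieRing L] [LieAlgebra K L]
    {m : L} (hm : m ∈ LieAlgebra.center K L) (y : L) : ⁅y, m⁆ = 0 := hm y

/-- A derivation `D` of `g` is almost inner if `D x ∈ ⁅g, x⁆` for all `x`;
it is central almost inner if moreover `D - ad x` maps `g` into the center
for some `x`.  The bracket of two central almost inner derivations is again
central almost inner; hence `CAID(g)` is a Lie subalgebra of `Der(g)`. -/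
theorem stmt1 {K L : Type*} [Field K] [LieRing L] [LieAlgebra K L]
    (C C' : LieDerivation K L L)
    (hC : ∀ x : L, ∃ y : L, C x = ⁅y, x⁆)
    (hC' : ∀ x : L, ∃ y : L, C' x = ⁅y, x⁆)
    (hCc : ∃ x : L, ∀ z : L, C z - ⁅x, z⁆ ∈ LieAlgebra.center K L)
    (hCc' : ∃ x : L, ∀ z : L, C' z - ⁅x, z⁆ ∈ LieAlgebra.center K L) :
    (∀ x : L, ∃ y : L, (⁅C, C'⁆ : LieDerivation K L L) x = ⁅y, x⁆) ∧
    (∃ x : L, ∀ z : L, (⁅C, C'⁆ : LieDerivation K L L) z - ⁅x, z⁆ ∈ LieAlgebra.center K L) := by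
  constructor
  · intro x
    obtain ⟨y, hy⟩ := hC x
    obtain ⟨y', hy'⟩ := hC' x
    refine ⟨C y' - C' y + ⁅y', y⁆, ?_⟩
    have h1 : C (C' x) = ⁅C y', x⁆ + ⁅y', ⁅y, x⁆⁆ := by
      rw [hy', C.apply_lie_eq_add, hy]; abel
    have h2 : C' (C x) = ⁅C' y, x⁆ + ⁅y, ⁅y', x⁆⁆ := by
      rw [hy, C'.apply_lie_eq_add, hy']; abel
    rw [LieDerivation.commutator_apply, h1, h2, add_lie, sub_lie, lie_lie]
    abel
  · obtain ⟨a, ha⟩ := hCc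
    obtain ⟨b, hb⟩ := hCc'
    refine ⟨⁅a, b⁆, fun z => ?_⟩
    have hCgz : C (C' z - ⁅b, z⁆) = 0 := by
      obtain ⟨y, hy⟩ := hC (C' z - ⁅b, z⁆)
      rw [hy, center_lie_zero (hb z)]
    have hC'fz : C' (C z - ⁅a, z⁆) = 0 := by
      obtain ⟨y, hy⟩ := hC' (C z - ⁅a, z⁆)
      rw [hy, center_lie_zero (ha z)]
    have key : (⁅C, C'⁆ : LieDerivation K L L) z - ⁅⁅a, b⁆, z⁆
        = (C ⁅b, z⁆ - ⁅a, ⁅b, z⁆⁆) - (C' ⁅a, z⁆ - ⁅b, ⁅a, z⁆⁆) := by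
      have e1 : C (C' z) = C ⁅b, z⁆ := by
        have h := C.map_sub (C' z) ⁅b, z⁆
        rw [hCgz] at h
        exact sub_eq_zero.mp h.symm
      have e2 : C' (C z) = C' ⁅a, z⁆ := by
        have h := C'.map_sub (C z) ⁅a, z⁆
        rw [hC'fz] at h
        exact sub_eq_zero.mp h.symm
      rw [LieDerivation.commutator_apply, e1, e2, lie_lie]
      abel
    rw [key]
    exact Submodule.sub_mem _ (ha ⁅b, z⁆) (hb ⁅a, z⁆)
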